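/- Fix z ∈ ℝ^p with Σ_{i=1}^p |z_i| > 1, and suppose λ* ≥ 0 satisfies Σ_{i=1}^p (|z_i| − λ*)₊ = 1. Then the vector S(z, λ*) with i-th coordinate sgn(z_i)·(|z_i| − λ*)₊ is the unique minimizer of x ↦ ‖x − z‖₂² over the ℓ¹ unit ball {x ∈ ℝ^p : Σ_i |x_i| ≤ 1}. Moreover, if Σ_{i=1}^p |z_i| ≤ 1, then z itself is the unique minimizer. -/

import Mathlib

/-- Euclidean norm of a vector in `ℝ^m`. -/
noncomputable def enorm2 {m : ℕ} (x : Fin m → ℝ) : ℝ := Real.sqrt (∑ i, x i ^ 2)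

lemma enorm_sq {m : ℕ} (x : Fin m → ℝ) : enorm2 x ^ 2 = ∑ i, x i ^ 2 := by
  unfold enorm2
  exact Real.sq_sqrt (Finset.sum_nonneg fun i _ => sq_nonneg _)

lemma key_ineq (lam a x : ℝ) (hlam : 0 ≤ lam) :
    lam * (max (|a| - lam) 0 - |x|) ≤
      (x - Real.sign a * max (|a| - lam) 0) * (Real.sign a * max (|a| - lam) 0 - a) := by
  rcases lt_trichotomy a 0 with h | h | h
  · rw [Real.sign_of_neg h, abs_of_neg h]
    rcases le_or_gt (-a) lam with h2 | h2
    · rw [max_eq_right (by linarith)]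
      nlinarith [neg_abs_le x, le_abs_self x, abs_nonneg x]
    · rw [max_eq_left (by linarith)]
      nlinarith [neg_abs_le x, le_abs_self x]
  · subst h
    simp only [Real.sign_zero, abs_zero, zero_mul, zero_sub, sub_zero, mul_zero, zero_mul]
    rw [max_eq_right (by linarith)]
    nlinarith [abs_nonneg x, mul_nonneg hlam (abs_nonneg x)]
  · rw [Real.sign_of_pos h, abs_of_pos h]
    rcases le_or_gt a lam with h2 | h2
    · rw [max_eq_right (by linarith)]
      nlinarith [neg_abs_le x, le_abs_self x, abs_nonneg x]
    · rw [max_eq_left (by linarith)]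
      nlinarith [neg_abs_le x, le_abs_self x]

/-- Projection onto the `ℓ¹` unit ball via soft thresholding: if `Σ_i |z_i| > 1` and `λ* ≥ 0`
satisfies `Σ_i (|z_i| - λ*)₊ = 1`, then `S(z, λ*)_i = sgn(z_i)(|z_i| - λ*)₊` is the unique
minimizer of `x ↦ ‖x - z‖₂²` over `{x : Σ_i |x_i| ≤ 1}`; moreover, if `Σ_i |z_i| ≤ 1`, then
`z` itself is the unique minimizer. -/
theorem stmt12 {p : ℕ} (z : Fin p → ℝ) (lam : ℝ) (hlam : 0 ≤ lam) :
    let S : Fin p → ℝ := fun i => Real.sign (z i) * max (|z i| - lam) 0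
    ((1 < ∑ i, |z i|) → (∑ i, max (|z i| - lam) 0) = 1 →
      (∑ i, |S i|) ≤ 1 ∧
      (∀ x : Fin p → ℝ, (∑ i, |x i|) ≤ 1 → enorm2 (S - z) ^ 2 ≤ enorm2 (x - z) ^ 2) ∧
      (∀ x : Fin p → ℝ, (∑ i, |x i|) ≤ 1 → enorm2 (x - z) ^ 2 ≤ enorm2 (S - z) ^ 2 → x = S)) ∧
    ((∑ i, |z i|) ≤ 1 →
      (∀ x : Fin p → ℝ, (∑ i, |x i|) ≤ 1 → enorm2 (z - z) ^ 2 ≤ enorm2 (x - z) ^ 2) ∧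
      (∀ x : Fin p → ℝ, (∑ i, |x i|) ≤ 1 → enorm2 (x - z) ^ 2 ≤ enorm2 (z - z) ^ 2 → x = z)) := by
  intro S
  have habs : ∀ i, |S i| = max (|z i| - lam) 0 := by
    intro i
    show |Real.sign (z i) * max (|z i| - lam) 0| = _
    rcases lt_trichotomy (z i) 0 with h | h | h
    · rw [Real.sign_of_neg h, abs_mul, abs_neg, abs_one, one_mul,
        abs_of_nonneg (le_max_right _ _)]
    · simp only [h, Real.sign_zero, zero_mul, abs_zero]
      exact (max_eq_right (by linarith)).symm
    · rw [Real.sign_of_pos h, abs_mul, abs_one, one_mul,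
        abs_of_nonneg (le_max_right _ _)]
  have iden : ∀ w x : Fin p → ℝ, ∑ i, (x i - z i) ^ 2 =
      ∑ i, (w i - z i) ^ 2 + ∑ i, (x i - w i) ^ 2
        + 2 * ∑ i, (x i - w i) * (w i - z i) := by
    intro w x
    rw [Finset.mul_sum, ← Finset.sum_add_distrib, ← Finset.sum_add_distrib]
    exact Finset.sum_congr rfl fun i _ => by ring
  have esq : ∀ x w : Fin p → ℝ, enorm2 (x - w) ^ 2 = ∑ i, (x i - w i) ^ 2 := by
    intro x w
    rw [enorm_sq]
    simp only [Pi.sub_apply]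
  constructor
  · intro _ hsum1
    have hSsum : (∑ i, |S i|) = 1 := by
      rw [Finset.sum_congr rfl fun i _ => habs i]; exact hsum1
    have cross : ∀ x : Fin p → ℝ, (∑ i, |x i|) ≤ 1 →
        0 ≤ ∑ i, (x i - S i) * (S i - z i) := by
      intro x hx
      have h1 : ∑ i, lam * (|S i| - |x i|) ≤ ∑ i, (x i - S i) * (S i - z i) :=
        Finset.sum_le_sum fun i _ => by
          rw [habs i]
          exact key_ineq lam (z i) (x i) hlam
      have h2 : ∑ i, lam * (|S i| - |x i|) = lam * (1 - ∑ i, |x i|) := by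
        rw [← Finset.mul_sum, Finset.sum_sub_distrib, hSsum]
      rw [h2] at h1
      have : 0 ≤ lam * (1 - ∑ i, |x i|) := mul_nonneg hlam (by linarith)
      linarith
    refine ⟨le_of_eq hSsum, fun x hx => ?_, fun x hx hle => ?_⟩
    · rw [esq, esq, iden S x]
      have := cross x hx
      have h2 : 0 ≤ ∑ i, (x i - S i) ^ 2 := Finset.sum_nonneg fun i _ => sq_nonneg _
      linarith
    · rw [esq, esq, iden S x] at hle
      have h1 := cross x hx
      have h2 : 0 ≤ ∑ i, (x i - S i) ^ 2 := Finset.sum_nonneg fun i _ => sq_nonneg _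
      have h3 : ∑ i, (x i - S i) ^ 2 = 0 := le_antisymm (by linarith) h2
      funext i
      have := (Finset.sum_eq_zero_iff_of_nonneg (fun i _ => sq_nonneg (x i - S i))).1 h3
        i (Finset.mem_univ i)
      have := sq_eq_zero_iff.1 this
      linarith
  · intro _
    refine ⟨fun x hx => ?_, fun x hx hle => ?_⟩
    · rw [esq, esq]
      simp only [sub_self]
      have : 0 ≤ ∑ i, (x i - z i) ^ 2 := Finset.sum_nonneg fun i _ => sq_nonneg _
      simpa using this
    · rw [esq, esq] at hle
      simp only [sub_self] at hle
      have h0 : (∑ i : Fin p, (0:ℝ) ^ 2) = 0 := by simp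
      rw [h0] at hle
      have h2 : 0 ≤ ∑ i, (x i - z i) ^ 2 := Finset.sum_nonneg fun i _ => sq_nonneg _
      have h3 : ∑ i, (x i - z i) ^ 2 = 0 := le_antisymm hle h2
      funext i
      have := (Finset.sum_eq_zero_iff_of_nonneg (fun i _ => sq_nonneg (x i - z i))).1 h3
        i (Finset.mem_univ i)
      have := sq_eq_zero_iff.1 this
      linarith
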